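/- In any game for a formula F (a justified sequence of moves starting with the proponent asserting F), every formula asserted by a P-move (even-index move) is a positive Gentzen-subformula of F, and every formula asserted by an O-move (odd-index move) is a negative Gentzen-subformula of F. -/
import Mathlib


/-- First-order terms: variables and constants. -/
inductive Tm where
  | var : ℕ → Tm
  | const : ℕ → Tm
deriving DecidableEq

/-- First-order formulas built from atoms with ∧, ∨, →, ∀, ∃
(negation `¬F` abbreviates `F → ⊥` for an atomic `⊥`). -/
inductive Fm where
  | atom : ℕ → List Tm → Fm
  | and : Fm → Fm → Fm
  | or : Fm → Fm → Fm
  | imp : Fm → Fm → Fm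
  | all : ℕ → Fm → Fm
  | ex : ℕ → Fm → Fm
deriving DecidableEq

/-- Substitution of a term for a variable in a term. -/
def Tm.subst (x : ℕ) (t : Tm) : Tm → Tm
  | .var y => if y = x then t else .var y
  | .const c => .const c

/-- Substitution `F[t/x]` of a term for a variable in a formula. -/
def Fm.subst (x : ℕ) (t : Tm) : Fm → Fm
  | .atom p ts => .atom p (ts.map (Tm.subst x t))
  | .and F G => .and (F.subst x t) (G.subst x t)
  | .or F G => .or (F.subst x t) (G.subst x t)
  | .imp F G => .imp (F.subst x t) (G.subst x t)
  | .all y F => if y = x then .all y F else .all y (F.subst x t)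
  | .ex y F => if y = x then .ex y F else .ex y (F.subst x t)

/-- `SubFm b G F` : `G` is a positive (`b = true`) / negative (`b = false`)
Gentzen-subformula of `F`. -/
inductive SubFm : Bool → Fm → Fm → Prop
  | refl (F : Fm) : SubFm true F F
  | and_left  {b F1 F2 F} : SubFm b (.and F1 F2) F → SubFm b F1 F
  | and_right {b F1 F2 F} : SubFm b (.and F1 F2) F → SubFm b F2 F
  | or_left   {b F1 F2 F} : SubFm b (.or F1 F2) F → SubFm b F1 F
  | or_right  {b F1 F2 F} : SubFm b (.or F1 F2) F → SubFm b F2 F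
  | imp_left  {b F1 F2 F} : SubFm b (.imp F1 F2) F → SubFm (!b) F1 F
  | imp_right {b F1 F2 F} : SubFm b (.imp F1 F2) F → SubFm b F2 F
  | all_inst  {b x F' F} (t : Tm) : SubFm b (.all x F') F → SubFm b (F'.subst x t) F
  | ex_inst   {b x F' F} (t : Tm) : SubFm b (.ex x F') F → SubFm b (F'.subst x t) F

/-- Auxiliary symbols and asserted formulas occurring in attacks. -/
inductive DSym where
  | fm : Fm → DSym          -- asserting the antecedent, attacking an implication
  | qand : Bool → DSym      -- ?∧₁ / ?∧₂
  | qor : DSym              -- ?∨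
  | qall : Tm → DSym        -- ?∀[t/x]
  | qex : DSym              -- ?∃
deriving DecidableEq

/-- Moves: attacks `(?, s)` and defences `(!, F)`. -/
inductive DMove where
  | attack : DSym → DMove
  | defend : Fm → DMove
deriving DecidableEq

/-- The formula asserted by a move, if any (defences assert; an attack asserts
exactly when it is the assertion of the antecedent of an implication). -/
def DMove.asserts : DMove → Option Fm
  | .attack (.fm F) => some F
  | .attack _ => none
  | .defend F => some F

/-- The attack table: which symbols attack which formulas. -/
def attacks : Fm → DSym → Prop
  | .imp F1 _, .fm G => G = F1
  | .and _ _, .qand _ => True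
  | .or _ _, .qor => True
  | .all _ _, .qall _ => True
  | .ex _ _, .qex => True
  | _, _ => False

/-- The defence table: `defends F s G` holds when `G` defends the assertion of
`F` against the attack `s`. -/
def defends : Fm → DSym → Fm → Prop
  | .imp _ F2, .fm _, G => G = F2
  | .and F1 F2, .qand i, G => G = (if i then F1 else F2)
  | .or F1 F2, .qor, G => G = F1 ∨ G = F2
  | .all x F, .qall t, G => G = F.subst x t
  | .ex x F, .qex, G => ∃ t, G = F.subst x t
  | _, _, _ => False

/-- A game is a list of moves, each (except the initial one) paired with the
index of its enabler. -/
abbrev GameRec := List (DMove × ℕ)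

/-- A move `m` with enabler index `e` is justified in `g`: an attack must
attack the formula asserted by its enabler; a defence must answer a justified
attack on a formula asserted earlier. -/
def Justified (g : GameRec) (m : DMove) (e : ℕ) : Prop :=
  match m with
  | .attack s => ∃ m' e', g[e]? = some (m', e') ∧
      ∃ F', m'.asserts = some F' ∧ attacks F' s
  | .defend G => ∃ s e', g[e]? = some (.attack s, e') ∧
      ∃ m'' e'', g[e']? = some (m'', e'') ∧
        ∃ F', m''.asserts = some F' ∧ attacks F' s ∧ defends F' s G

/-- `IsGame F g` : `g` is a (possibly partial) game for the formula `F`: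
move 0 asserts `F`; every odd-index (Opponent) move is enabled by its
immediate predecessor; every even-index (Proponent) move is enabled by a
preceding odd-index move; every move is justified; every Proponent assertion
of an atomic formula is a reprise; and no two distinct Proponent defences
with the same enabler assert the same formula. -/
def IsGame (F : Fm) (g : GameRec) : Prop :=
  (g ≠ [] → g[0]? = some (DMove.defend F, 0)) ∧
  (∀ i, 0 < i → ∀ m e, g[i]? = some (m, e) →
    (i % 2 = 1 → e = i - 1) ∧ (i % 2 = 0 → e < i ∧ e % 2 = 1)) ∧
  (∀ i, 0 < i → ∀ m e, g[i]? = some (m, e) → Justified g m e) ∧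
  (∀ i, 0 < i → i % 2 = 0 → ∀ m e, g[i]? = some (m, e) →
    ∀ p ts, m.asserts = some (Fm.atom p ts) →
      ∃ j < i, j % 2 = 1 ∧ ∃ m' e', g[j]? = some (m', e') ∧
        m'.asserts = some (Fm.atom p ts)) ∧
  (∀ i j, i % 2 = 0 → j % 2 = 0 → ∀ G e,
    g[i]? = some (DMove.defend G, e) → g[j]? = some (DMove.defend G, e) → i = j)

/-- A finite game is won by the Proponent iff it is a game and no move
(in particular no Opponent move) legally extends it. -/
def WonByP (F : Fm) (g : GameRec) : Prop :=
  IsGame F g ∧ ∀ m e, ¬ IsGame F (g ++ [(m, e)])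

/-- In any game for `F`, every formula asserted by a P-move (even index) is a
positive Gentzen-subformula of `F`, and every formula asserted by an O-move
(odd index) is a negative Gentzen-subformula of `F`. -/
theorem stmt_10 (F : Fm) (g : GameRec) (hg : IsGame F g)
    (i : ℕ) (m : DMove) (e : ℕ) (hi : g[i]? = some (m, e))
    (G : Fm) (hG : m.asserts = some G) :
    (i % 2 = 0 → SubFm true G F) ∧ (i % 2 = 1 → SubFm false G F) := by
  induction i using Nat.strong_induction_on generalizing m e G with
  | _ i IH =>
  have hlen : g ≠ [] := by intro h; simp [h] at hi
  have h0 := hg.1 hlen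
  rcases Nat.eq_zero_or_pos i with h0i | hpos
  · subst h0i
    rw [hi] at h0
    obtain ⟨hm, -⟩ : m = DMove.defend F ∧ e = 0 := by
      have := Option.some.inj h0; exact ⟨congrArg Prod.fst this, congrArg Prod.snd this⟩
    subst hm
    simp only [DMove.asserts, Option.some.injEq] at hG
    subst hG
    exact ⟨fun _ => SubFm.refl F, fun h => by omega⟩
  · have hpe := hg.2.1 i hpos m e hi
    have hJ := hg.2.2.1 i hpos m e hi
    have main : ∀ b : Bool, i % 2 = (if b then 0 else 1) → SubFm b G F := by
      intro b hb
      have hei : e < i ∧ e % 2 = (if b then 1 else 0) := by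
        obtain ⟨ho, hev⟩ := hpe
        cases b
        · have hb' : i % 2 = 1 := by simpa using hb
          have := ho hb'
          refine ⟨by omega, ?_⟩
          show e % 2 = 0
          omega
        · have hb' : i % 2 = 0 := by simpa using hb
          have := hev hb'
          refine ⟨by omega, ?_⟩
          show e % 2 = 1
          omega
      match m with
      | .attack s =>
        obtain ⟨m', e', hge, F', hF'a, hatt⟩ := hJ
        -- the attack asserts G, so s = .fm G
        have hs : s = DSym.fm G := by
          cases s <;> simp [DMove.asserts] at hG; simp [hG]
        subst hs
        -- attacks F' (.fm G) forces F' = imp G F2 (up to G = antecedent)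
        have hsub : SubFm (!b) F' F := by
          have := IH e hei.1 m' e' hge F' hF'a
          cases b
          · exact this.1 (by simpa using hei.2)
          · exact this.2 (by simpa using hei.2)
        match F', hatt with
        | .imp F1 F2, hatt =>
          have hG1 : G = F1 := hatt
          subst hG1
          have := SubFm.imp_left hsub
          simpa using this
      | .defend G' =>
        have hGG : G' = G := by simpa [DMove.asserts] using hG
        subst hGG
        obtain ⟨s, e', hge, m'', e'', hge', F', hF'a, hatt, hdef⟩ := hJ
        have hepos : 0 < e := by
          rcases Nat.eq_zero_or_pos e with h | h
          · subst h; rw [hge] at h0; cases Option.some.inj h0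
          · exact h
        have hpe' := hg.2.1 e hepos _ e' hge
        have he'i : e' < i ∧ e' % 2 = (if b then 0 else 1) := by
          obtain ⟨ho, hev⟩ := hpe'
          cases b
          · have he2 : e % 2 = 0 := by simpa using hei.2
            have := hev he2
            refine ⟨by omega, ?_⟩
            show e' % 2 = 1
            omega
          · have he2 : e % 2 = 1 := by simpa using hei.2
            have := ho he2
            refine ⟨by omega, ?_⟩
            show e' % 2 = 0
            omega
        have hsub : SubFm b F' F := by
          have := IH e' he'i.1 m'' e'' hge' F' hF'a
          cases b
          · exact this.2 (by simpa using he'i.2)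
          · exact this.1 (by simpa using he'i.2)
        match F', s, hatt, hdef with
        | .imp F1 F2, .fm _, _, hdef =>
          have : G' = F2 := hdef
          subst this; exact SubFm.imp_right hsub
        | .and F1 F2, .qand j, _, hdef =>
          have : G' = if j then F1 else F2 := hdef
          subst this
          cases j
          · exact SubFm.and_right hsub
          · exact SubFm.and_left hsub
        | .or F1 F2, .qor, _, hdef =>
          rcases (hdef : G' = F1 ∨ G' = F2) with h | h <;> subst h
          · exact SubFm.or_left hsub
          · exact SubFm.or_right hsub
        | .all x Fb, .qall t, _, hdef =>
          have : G' = Fb.subst x t := hdef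
          subst this; exact SubFm.all_inst t hsub
        | .ex x Fb, .qex, _, hdef =>
          obtain ⟨t, ht⟩ := (hdef : ∃ t, G' = Fb.subst x t)
          subst ht; exact SubFm.ex_inst t hsub
    refine ⟨fun h => main true (by simpa using h), fun h => main false (by simpa using h)⟩
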